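/- Let n ≥ 1 and let f : ℝⁿ → ℝ be a C² function with ‖∇f(x)‖ = 1 for all x ∈ ℝⁿ. Then for every x ∈ ℝⁿ and every t ∈ ℝ: ∇f(x + t·∇f(x)) = ∇f(x) and f(x + t·∇f(x)) = f(x) + t. -/

import Mathlib

open InnerProductSpace Set
open scoped RealInnerProductSpace

namespace EikonalAux

noncomputable def A (n : ℕ) :
    StrongDual ℝ (EuclideanSpace ℝ (Fin n)) →L[ℝ] EuclideanSpace ℝ (Fin n) :=
  (toDual ℝ (EuclideanSpace ℝ (Fin n))).symm.toContinuousLinearEquiv.toContinuousLinearMap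

noncomputable def H {n : ℕ} (f : EuclideanSpace ℝ (Fin n) → ℝ) (y : EuclideanSpace ℝ (Fin n)) :
    EuclideanSpace ℝ (Fin n) →L[ℝ] EuclideanSpace ℝ (Fin n) :=
  (A n).comp (fderiv ℝ (fderiv ℝ f) y)

variable {n : ℕ} {f : EuclideanSpace ℝ (Fin n) → ℝ}

lemma hgd (hf : Differentiable ℝ (fderiv ℝ f)) (y : EuclideanSpace ℝ (Fin n)) :
    HasFDerivAt (gradient f) (H f y) y := by
  have : HasFDerivAt (fun z => A n (fderiv ℝ f z)) (H f y) y :=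
    (A n).hasFDerivAt.comp y (hf y).hasFDerivAt
  exact this

lemma hinner (y u w : EuclideanSpace ℝ (Fin n)) :
    ⟪H f y u, w⟫ = fderiv ℝ (fderiv ℝ f) y u w :=
  toDual_symm_apply

lemma fderiv_eq_inner_gradient (y u : EuclideanSpace ℝ (Fin n)) :
    fderiv ℝ f y u = ⟪gradient f y, u⟫ :=
  (toDual_symm_apply (y := fderiv ℝ f y) (x := u)).symm

/-- The Hessian kills the gradient for a unit eikonal function. -/
lemma hess_grad_eq_zero (hf : ContDiff ℝ 2 f)
    (heik : ∀ x : EuclideanSpace ℝ (Fin n), ‖gradient f x‖ = 1)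
    (y : EuclideanSpace ℝ (Fin n)) : H f y (gradient f y) = 0 := by
  have hdf : Differentiable ℝ f := hf.differentiable two_ne_zero
  have hd1 : ContDiff ℝ 1 (fderiv ℝ f) := hf.fderiv_right (by norm_num)
  have hdf' : Differentiable ℝ (fderiv ℝ f) := hd1.differentiable one_ne_zero
  have hsymm : ∀ u w, fderiv ℝ (fderiv ℝ f) y u w = fderiv ℝ (fderiv ℝ f) y w u :=
    second_derivative_symmetric (fun z => (hdf z).hasFDerivAt) (hdf' y).hasFDerivAt
  have horth : ∀ u, ⟪H f y u, gradient f y⟫ = 0 := by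
    intro u
    have h1 : HasFDerivAt (fun z => ⟪gradient f z, gradient f z⟫)
        ((fderivInnerCLM ℝ (gradient f y, gradient f y)).comp ((H f y).prod (H f y))) y :=
      (hgd hdf' y).inner ℝ (hgd hdf' y)
    have h2 : HasFDerivAt (fun z => ⟪gradient f z, gradient f z⟫)
        (0 : EuclideanSpace ℝ (Fin n) →L[ℝ] ℝ) y := by
      have : (fun z : EuclideanSpace ℝ (Fin n) => ⟪gradient f z, gradient f z⟫)
          = fun _ => (1 : ℝ) := by
        funext z
        rw [real_inner_self_eq_norm_sq, heik z]; norm_num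
      rw [this]; exact hasFDerivAt_const 1 y
    have h3 := h1.unique h2
    have h4 := DFunLike.congr_fun h3 u
    simp only [ContinuousLinearMap.comp_apply, ContinuousLinearMap.prod_apply,
      fderivInnerCLM_apply, ContinuousLinearMap.zero_apply] at h4
    have h5 : ⟪gradient f y, H f y u⟫ = ⟪H f y u, gradient f y⟫ := real_inner_comm _ _
    linarith [h4, h5]
  have key : ∀ u, ⟪H f y (gradient f y), u⟫ = 0 := by
    intro u
    rw [hinner, hsymm, ← hinner]
    exact horth u
  have := key (H f y (gradient f y))
  rwa [inner_self_eq_zero] at this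

lemma line_hasDerivAt (x v : EuclideanSpace ℝ (Fin n)) (s : ℝ) :
    HasDerivAt (fun s : ℝ => x + s • v) v s := by
  simpa using ((hasDerivAt_id s).smul_const v).const_add x

/-- Forward-time constancy of the gradient along the gradient line. -/
lemma forward (hf : ContDiff ℝ 2 f)
    (heik : ∀ x : EuclideanSpace ℝ (Fin n), ‖gradient f x‖ = 1)
    (x : EuclideanSpace ℝ (Fin n)) {t : ℝ} (ht : 0 ≤ t) :
    gradient f (x + t • gradient f x) = gradient f x := by
  have hd1 : ContDiff ℝ 1 (fderiv ℝ f) := hf.fderiv_right (by norm_num)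
  have hdf' : Differentiable ℝ (fderiv ℝ f) := hd1.differentiable one_ne_zero
  set v := gradient f x with hv
  -- derivative of the gradient along the line
  have hw : ∀ s : ℝ, HasDerivAt (fun s : ℝ => gradient f (x + s • v))
      (H f (x + s • v) v) s := fun s =>
    (hgd hdf' (x + s • v)).comp_hasDerivAt (l := gradient f) s (line_hasDerivAt x v s)
  have hφ : ∀ s : ℝ, HasDerivAt (fun s : ℝ => gradient f (x + s • v) - v)
      (H f (x + s • v) v) s := fun s => (hw s).sub_const v
  -- uniform bound on the Hessian along the compact segment
  have hcont : ContinuousOn (fun s : ℝ => ‖H f (x + s • v)‖) (Icc 0 t) := by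
    have hf'' : Continuous (fderiv ℝ (fderiv ℝ f)) := hd1.continuous_fderiv one_ne_zero
    have hHc : Continuous (fun y : EuclideanSpace ℝ (Fin n) => H f y) :=
      continuous_const.clm_comp hf''
    exact ((hHc.comp (continuous_const.add (continuous_id.smul continuous_const))).norm).continuousOn
  obtain ⟨s₀, hs₀, hK⟩ := isCompact_Icc.exists_isMaxOn ⟨0, left_mem_Icc.2 ht⟩ hcont
  set K := ‖H f (x + s₀ • v)‖ with hKdef
  have hbound : ∀ s ∈ Ico (0:ℝ) t, ‖H f (x + s • v) v‖
      ≤ K * ‖gradient f (x + s • v) - v‖ + 0 := by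
    intro s hs
    have h0 : H f (x + s • v) v = -(H f (x + s • v) (gradient f (x + s • v) - v)) := by
      rw [map_sub, hess_grad_eq_zero hf heik, zero_sub, neg_neg]
    rw [h0, norm_neg, add_zero]
    calc ‖H f (x + s • v) (gradient f (x + s • v) - v)‖
        ≤ ‖H f (x + s • v)‖ * ‖gradient f (x + s • v) - v‖ :=
          (H f (x + s • v)).le_opNorm _
      _ ≤ K * ‖gradient f (x + s • v) - v‖ :=
          mul_le_mul_of_nonneg_right (hK (Ico_subset_Icc_self hs)) (norm_nonneg _)
  have hzero : ‖gradient f (x + (0:ℝ) • v) - v‖ ≤ 0 := by simp [hv]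
  have := norm_le_gronwallBound_of_norm_deriv_right_le
    (f := fun s : ℝ => gradient f (x + s • v) - v)
    (f' := fun s : ℝ => H f (x + s • v) v) (a := 0) (b := t) (δ := 0) (K := K) (ε := 0)
    (fun s _ => (hφ s).continuousAt.continuousWithinAt)
    (fun s _ => (hφ s).hasDerivWithinAt) hzero hbound t (right_mem_Icc.2 ht)
  rw [gronwallBound_ε0_δ0] at this
  have h6 : gradient f (x + t • v) - v = 0 := by
    have := le_antisymm this (norm_nonneg _)
    exact norm_eq_zero.mp this
  exact sub_eq_zero.mp h6

lemma gradient_neg' (hdf : Differentiable ℝ f) (y : EuclideanSpace ℝ (Fin n)) :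
    gradient (fun z => -f z) y = -gradient f y := by
  have h : HasFDerivAt (fun z => -f z) (-(fderiv ℝ f y)) y := (hdf y).hasFDerivAt.neg
  have h2 := h.hasGradientAt.gradient
  rw [h2, map_neg]
  rfl

end EikonalAux

/-- For a C² unit eikonal function `f : ℝⁿ → ℝ` (`‖∇f‖ ≡ 1`), along the straight line
`t ↦ x + t·∇f(x)` the gradient is constant and `f` increases linearly:
`∇f(x + t·∇f(x)) = ∇f(x)` and `f(x + t·∇f(x)) = f(x) + t`. -/
theorem eikonal_gradient_line {n : ℕ} (hn : 1 ≤ n)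
    (f : EuclideanSpace ℝ (Fin n) → ℝ) (hf : ContDiff ℝ 2 f)
    (heik : ∀ x : EuclideanSpace ℝ (Fin n), ‖gradient f x‖ = 1) :
    ∀ (x : EuclideanSpace ℝ (Fin n)) (t : ℝ),
      gradient f (x + t • gradient f x) = gradient f x ∧
      f (x + t • gradient f x) = f x + t := by
  intro x t
  have hdf : Differentiable ℝ f := hf.differentiable two_ne_zero
  set v := gradient f x with hv
  -- gradient constant along the whole line
  have hgrad : ∀ s : ℝ, gradient f (x + s • v) = v := by
    intro s
    rcases le_or_gt 0 s with hs | hs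
    · exact EikonalAux.forward hf heik x hs
    · set f₂ : EuclideanSpace ℝ (Fin n) → ℝ := fun z => -f z with hf₂def
      have hf₂ : ContDiff ℝ 2 f₂ := hf.neg
      have hg₂ : ∀ z, gradient f₂ z = -gradient f z := fun z =>
        EikonalAux.gradient_neg' hdf z
      have heik₂ : ∀ z : EuclideanSpace ℝ (Fin n), ‖gradient f₂ z‖ = 1 := fun z => by
        rw [hg₂ z, norm_neg]; exact heik z
      have hfor := EikonalAux.forward hf₂ heik₂ x (t := -s) (by linarith)
      rw [hg₂, hg₂] at hfor
      have hpt : x + (-s) • -gradient f x = x + s • v := by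
        rw [smul_neg, neg_smul, neg_neg, hv]
      rw [hpt] at hfor
      exact neg_injective hfor
  refine ⟨hgrad t, ?_⟩
  -- f increases linearly
  have hψ : ∀ s : ℝ, HasDerivAt (fun s : ℝ => f (x + s • v) - s) 0 s := by
    intro s
    have h1 : HasDerivAt (fun s : ℝ => f (x + s • v)) (fderiv ℝ f (x + s • v) v) s :=
      (hdf _).hasFDerivAt.comp_hasDerivAt s (EikonalAux.line_hasDerivAt x v s)
    have h2 : fderiv ℝ f (x + s • v) v = 1 := by
      rw [EikonalAux.fderiv_eq_inner_gradient, hgrad s, real_inner_self_eq_norm_sq, heik x]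
      norm_num
    rw [h2] at h1
    have h3 := h1.sub (hasDerivAt_id' s); rw [sub_self] at h3; exact h3
  have hconst := is_const_of_deriv_eq_zero (f := fun s : ℝ => f (x + s • v) - s)
    (fun s => (hψ s).differentiableAt) (fun s => (hψ s).deriv) t 0
  simp only [zero_smul, add_zero, sub_zero] at hconst
  linarith [hconst]
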